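/- The image of the derivation Δ = D_1 + x_1^{p-1}D_2 + ··· + x_1^{p-1}···x_{n-2}^{p-1}D_{n-1} acting on B_n is the k-span of the monomials x_1^{a_1}···x_n^{a_n} with (a_1,...,a_{n-1}) ≠ (p-1,...,p-1); in particular the image of Δ has codimension p in B_n. -/

import Mathlib

open MvPolynomial Finset

section Aux

lemma deriv_sum_apply {k B ι : Type*} [CommRing k] [CommRing B] [Algebra k B]
    (s : Finset ι) (D : ι → Derivation k B B) (b : B) :
    (∑ i ∈ s, D i) b = ∑ i ∈ s, D i b := by
  induction s using Finset.cons_induction with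
  | empty => simp
  | cons a s ha ih => rw [Finset.sum_cons, Derivation.add_apply, ih, Finset.sum_cons]

lemma deriv_prod {k B ι : Type*} [DecidableEq ι] [CommRing k] [CommRing B] [Algebra k B]
    (D : Derivation k B B) (s : Finset ι) (f : ι → B) :
    D (∏ i ∈ s, f i) = ∑ i ∈ s, (∏ j ∈ s.erase i, f j) * D (f i) := by
  induction s using Finset.cons_induction with
  | empty => simp
  | cons a s ha ih =>
    rw [Finset.prod_cons, D.leibniz, ih, Finset.sum_cons, Finset.erase_cons,
      smul_eq_mul, smul_eq_mul, Finset.mul_sum, add_comm]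
    congr 1
    apply Finset.sum_congr rfl
    intro i hi
    rw [Finset.erase_cons_of_ne ha (fun h => ha (h ▸ hi)), Finset.prod_cons, mul_assoc]

lemma mono_mul {B : Type*} [CommRing B] {n : ℕ} (x : Fin n → B) (u v : Fin n → ℕ) :
    (∏ i, x i ^ u i) * (∏ i, x i ^ v i) = ∏ i, x i ^ (u i + v i) := by
  rw [← Finset.prod_mul_distrib]
  exact Finset.prod_congr rfl fun i _ => (pow_add _ _ _).symm

lemma mono_zero {B : Type*} [CommRing B] {n p : ℕ} {x : Fin n → B}
    (hxp : ∀ i, x i ^ p = 0) {u : Fin n → ℕ} (h : ∃ i, p ≤ u i) :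
    ∏ i, x i ^ u i = 0 := by
  obtain ⟨i, hi⟩ := h
  apply Finset.prod_eq_zero (Finset.mem_univ i)
  rw [show u i = p + (u i - p) by omega, pow_add, hxp, zero_mul]

lemma D_mono {k B : Type*} [CommRing k] [CommRing B] [Algebra k B] {n : ℕ}
    (x : Fin n → B) (D : Fin n → Derivation k B B)
    (hD : ∀ i j, D i (x j) = if i = j then 1 else 0) (i' : Fin n) (a : Fin n → ℕ) :
    D i' (∏ j, x j ^ a j) =
      a i' • (x i' ^ (a i' - 1) * ∏ j ∈ Finset.univ.erase i', x j ^ a j) := by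
  rw [deriv_prod]
  rw [Finset.sum_eq_single i']
  · rw [Derivation.leibniz_pow, hD, if_pos rfl]
    simp only [smul_eq_mul, mul_one]
    ring
  · intro j _ hj
    rw [Derivation.leibniz_pow, hD, if_neg (fun h => hj h.symm), smul_zero, smul_zero, mul_zero]
  · intro h
    exact absurd (Finset.mem_univ i') h

lemma F1eq {B : Type*} [CommRing B] {n p : ℕ} {h : n - 1 ≤ n} (x : Fin n → B) (i : Fin (n - 1)) :
    (∏ j ∈ Finset.univ.filter (fun j : Fin (n - 1) => j < i), x (Fin.castLE h j) ^ (p - 1))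
      = ∏ k' : Fin n, x k' ^ (if (k' : ℕ) < (i : ℕ) then p - 1 else 0) := by
  have himg : Finset.image (Fin.castLE h) (Finset.univ.filter fun j : Fin (n - 1) => j < i)
      = Finset.univ.filter (fun k' : Fin n => (k' : ℕ) < (i : ℕ)) := by
    ext k'
    simp only [Finset.mem_image, Finset.mem_filter, Finset.mem_univ, true_and, Fin.lt_def]
    constructor
    · rintro ⟨j, hj, rfl⟩
      simpa using hj
    · intro hk
      have := i.isLt
      exact ⟨⟨(k' : ℕ), by omega⟩, hk, rfl⟩
  calc (∏ j ∈ Finset.univ.filter (fun j : Fin (n - 1) => j < i), x (Fin.castLE h j) ^ (p - 1))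
      = ∏ k' ∈ Finset.image (Fin.castLE h) (Finset.univ.filter fun j : Fin (n - 1) => j < i),
          x k' ^ (p - 1) := by
        rw [Finset.prod_image (fun a _ b _ hab => Fin.castLE_injective h hab)]
    _ = ∏ k' ∈ Finset.univ.filter (fun k' : Fin n => (k' : ℕ) < (i : ℕ)), x k' ^ (p - 1) := by
        rw [himg]
    _ = ∏ k' : Fin n, x k' ^ (if (k' : ℕ) < (i : ℕ) then p - 1 else 0) := by
        rw [Finset.prod_filter]
        exact Finset.prod_congr rfl fun k' _ => by split <;> simp

lemma F2eq {B : Type*} [CommRing B] {n : ℕ} (x : Fin n → B) (i' : Fin n) (a : Fin n → ℕ)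
    (e' : ℕ) :
    x i' ^ e' * ∏ j ∈ Finset.univ.erase i', x j ^ a j
      = ∏ j : Fin n, x j ^ (if j = i' then e' else a j) := by
  rw [← Finset.mul_prod_erase Finset.univ _ (Finset.mem_univ i'), if_pos rfl]
  congr 1
  exact Finset.prod_congr rfl fun j hj => by rw [if_neg (Finset.mem_erase.1 hj).1]

lemma Delta_mono {k B : Type*} [CommRing k] [CommRing B] [Algebra k B] {p n : ℕ}
    {h : n - 1 ≤ n} (x : Fin n → B) (D : Fin n → Derivation k B B)
    (hD : ∀ i j, D i (x j) = if i = j then 1 else 0) (a : Fin n → ℕ) :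
    (∑ i : Fin (n - 1),
      (∏ j ∈ Finset.univ.filter (fun j : Fin (n - 1) => j < i),
          x (Fin.castLE h j) ^ (p - 1)) • D (Fin.castLE h i)) (∏ j, x j ^ a j)
    = ∑ i : Fin (n - 1), a (Fin.castLE h i) •
        ∏ j : Fin n, x j ^
          ((if (j : ℕ) < (i : ℕ) then p - 1 else 0) +
           (if j = Fin.castLE h i then a (Fin.castLE h i) - 1 else a j)) := by
  rw [deriv_sum_apply]
  refine Finset.sum_congr rfl fun i _ => ?_
  rw [Derivation.smul_apply, D_mono x D hD, F2eq, F1eq (p := p) x i]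
  rw [smul_comm, smul_eq_mul, mono_mul]

lemma mono_X {k : Type*} [CommRing k] {n : ℕ} (v : Fin n →₀ ℕ) :
    (∏ i : Fin n, (X i : MvPolynomial (Fin n) k) ^ v i) = monomial v 1 := by
  rw [← prod_X_pow_eq_monomial]
  exact (Finset.prod_subset (Finset.subset_univ _) (fun i _ hi => by
    rw [Finsupp.notMem_support_iff.1 hi, pow_zero])).symm

lemma coeff_vanish {k : Type*} [CommRing k] {n p : ℕ}
    (f : MvPolynomial (Fin n) k)
    (hf : f ∈ Ideal.span (Set.range fun i : Fin n => (X i : MvPolynomial (Fin n) k) ^ p))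
    (w : Fin n →₀ ℕ) (hw : ∀ i, w i < p) : coeff w f = 0 := by
  classical
  let J : Ideal (MvPolynomial (Fin n) k) :=
  { carrier := {g | ∀ v : Fin n →₀ ℕ, (∀ i, v i < p) → coeff v g = 0}
    zero_mem' := fun v _ => by simp
    add_mem' := fun h1 h2 v hv => by
      rw [coeff_add, h1 v hv, h2 v hv, add_zero]
    smul_mem' := fun r g hg v hv => by
      rw [smul_eq_mul, coeff_mul]
      refine Finset.sum_eq_zero fun bc hbc => ?_
      rw [Finset.HasAntidiagonal.mem_antidiagonal] at hbc
      have h2 : ∀ i, bc.2 i < p := fun i =>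
        lt_of_le_of_lt (by rw [← hbc]; simp) (hv i)
      rw [hg bc.2 h2, mul_zero] }
  have hJ : Ideal.span (Set.range fun i : Fin n => (X i : MvPolynomial (Fin n) k) ^ p) ≤ J := by
    rw [Ideal.span_le]
    rintro _ ⟨i, rfl⟩ v hv
    show coeff v ((X i : MvPolynomial (Fin n) k) ^ p) = 0
    rw [X_pow_eq_monomial, coeff_monomial, if_neg]
    intro hEq
    exact absurd (by rw [← hEq, Finsupp.single_eq_same]) (hv i).ne'
  exact hJ hf w hw

lemma mem_span_mono {k B : Type*} [CommRing k] [CommRing B] [Algebra k B] {n p : ℕ}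
    (e : (MvPolynomial (Fin n) k ⧸
        Ideal.span (Set.range fun i : Fin n => (X i : MvPolynomial (Fin n) k) ^ p)) ≃ₐ[k] B)
    (x : Fin n → B) (hx : ∀ j, x j = e (Ideal.Quotient.mk _ (X j))) (b : B) :
    b ∈ Submodule.span k (Set.range fun a : Fin n → ℕ => ∏ i, x i ^ a i) := by
  classical
  let φ : MvPolynomial (Fin n) k →ₐ[k] B := e.toAlgHom.comp
    (Ideal.Quotient.mkₐ k (Ideal.span (Set.range fun i : Fin n => (X i : MvPolynomial (Fin n) k) ^ p)))
  obtain ⟨q, rfl⟩ := e.surjective b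
  obtain ⟨f, rfl⟩ := Ideal.Quotient.mk_surjective q
  have hb : e (Ideal.Quotient.mk _ f) = φ f := rfl
  rw [hb, as_sum f, map_sum]
  refine Submodule.sum_mem _ fun v hv => ?_
  have hmono : φ (monomial v (coeff v f)) = coeff v f • ∏ i, x i ^ (v i) := by
    have : monomial v (coeff v f) = coeff v f • ∏ i : Fin n, (X i : MvPolynomial (Fin n) k) ^ v i := by
      rw [mono_X, smul_monomial, smul_eq_mul, mul_one]
    rw [this, map_smul, map_prod]
    congr 1
    refine Finset.prod_congr rfl fun i _ => ?_
    rw [map_pow]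
    congr 1
    rw [hx i]
    rfl
  rw [hmono]
  exact Submodule.smul_mem _ _ (Submodule.subset_span ⟨fun i => v i, rfl⟩)

noncomputable def coeffFun {k B : Type*} [CommRing k] [CommRing B] [Algebra k B] {n p : ℕ}
    (e : (MvPolynomial (Fin n) k ⧸
        Ideal.span (Set.range fun i : Fin n => (X i : MvPolynomial (Fin n) k) ^ p)) ≃ₐ[k] B)
    (w : Fin n →₀ ℕ) (hw : ∀ i, w i < p) : B →ₗ[k] k :=
  (Submodule.liftQ
      ((Ideal.span (Set.range fun i : Fin n => (X i : MvPolynomial (Fin n) k) ^ p)).restrictScalars k)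
      (lcoeff k w)
      (fun f hf => LinearMap.mem_ker.2 (coeff_vanish f hf w hw))) ∘ₗ
    ((Submodule.Quotient.restrictScalarsEquiv k
        (Ideal.span (Set.range fun i : Fin n => (X i : MvPolynomial (Fin n) k) ^ p) :
          Ideal (MvPolynomial (Fin n) k))).symm.toLinearMap) ∘ₗ
    e.symm.toLinearMap

lemma coeffFun_mono {k B : Type*} [CommRing k] [CommRing B] [Algebra k B] {n p : ℕ}
    (e : (MvPolynomial (Fin n) k ⧸
        Ideal.span (Set.range fun i : Fin n => (X i : MvPolynomial (Fin n) k) ^ p)) ≃ₐ[k] B)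
    (x : Fin n → B) (hx : ∀ j, x j = e (Ideal.Quotient.mk _ (X j)))
    (w : Fin n →₀ ℕ) (hw : ∀ i, w i < p) (a : Fin n → ℕ) :
    coeffFun e w hw (∏ i, x i ^ a i)
      = if Finsupp.equivFunOnFinite.symm a = w then 1 else 0 := by
  classical
  have h1 : e.symm (∏ i, x i ^ a i)
      = Ideal.Quotient.mk _ (∏ i : Fin n, (X i : MvPolynomial (Fin n) k) ^ a i) := by
    rw [map_prod, map_prod]
    refine Finset.prod_congr rfl fun i _ => ?_
    rw [map_pow, map_pow, hx i, AlgEquiv.symm_apply_apply]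
  have h2 : (∏ i : Fin n, (X i : MvPolynomial (Fin n) k) ^ a i)
      = monomial (Finsupp.equivFunOnFinite.symm a) 1 := by
    rw [← mono_X]
    exact Finset.prod_congr rfl fun i _ => by
      rw [Finsupp.coe_equivFunOnFinite_symm]
  rw [coeffFun, LinearMap.comp_apply, LinearMap.comp_apply, AlgEquiv.toLinearMap_apply, h1,
    ← Ideal.Quotient.mk_eq_mk, LinearEquiv.coe_toLinearMap,
    Submodule.Quotient.restrictScalarsEquiv_symm_mk, Submodule.liftQ_apply, lcoeff_apply, h2,
    coeff_monomial]

end Aux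

/-- The image of `Δ = D_1 + x_1^{p-1}D_2 + ⋯ + x_1^{p-1}⋯x_{n-2}^{p-1}D_{n-1}` acting on `B_n`
is the `k`-span of the monomials `x_1^{a_1}⋯x_n^{a_n}` with `(a_1,...,a_{n-1}) ≠ (p-1,...,p-1)`;
in particular the image of `Δ` has codimension `p` in `B_n`. -/
theorem image_of_Delta
    (k : Type*) [Field k] (p n : ℕ) [Fact (Nat.Prime p)] [CharP k p] (hp : 3 < p)
    (hn : 3 ≤ n)
    (B : Type*) [CommRing B] [Algebra k B]
    (e : (MvPolynomial (Fin n) k ⧸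
        Ideal.span (Set.range fun i : Fin n => (X i : MvPolynomial (Fin n) k) ^ p)) ≃ₐ[k] B)
    (x : Fin n → B) (hx : ∀ j, x j = e (Ideal.Quotient.mk _ (X j)))
    (D : Fin n → Derivation k B B) (hD : ∀ i j, D i (x j) = if i = j then 1 else 0)
    (ℓ : Fin n) (hℓ : (ℓ : ℕ) = n - 1)
    (Δ : Derivation k B B)
    (hΔ : Δ = ∑ i : Fin (n - 1),
      (∏ j ∈ Finset.univ.filter (fun j : Fin (n - 1) => j < i),
          x (Fin.castLE (by omega : n - 1 ≤ n) j) ^ (p - 1)) •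
        D (Fin.castLE (by omega : n - 1 ≤ n) i)) :
    LinearMap.range (Δ : B →ₗ[k] B) =
        Submodule.span k {m : B | ∃ a : Fin n → ℕ, (∀ i, a i < p) ∧
          (∃ i, i ≠ ℓ ∧ a i ≠ p - 1) ∧ m = ∏ i, x i ^ a i} ∧
      Module.finrank k (B ⧸ LinearMap.range (Δ : B →ₗ[k] B)) = p := by
  classical
  have hxp : ∀ i, x i ^ p = 0 := by
    intro i
    rw [hx i, ← map_pow, ← map_pow]
    rw [Ideal.Quotient.eq_zero_iff_mem.2 (Ideal.subset_span (Set.mem_range_self i)), map_zero]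
  set S : Set B := {m : B | ∃ a : Fin n → ℕ, (∀ i, a i < p) ∧
      (∃ i, i ≠ ℓ ∧ a i ≠ p - 1) ∧ m = ∏ i, x i ^ a i} with hSdef
  -- span S ≤ range Δ
  have hSle : Submodule.span k S ≤ LinearMap.range (Δ : B →ₗ[k] B) := by
    rw [Submodule.span_le]
    rintro m ⟨a, ha, ⟨i₁, hi₁ℓ, hi₁⟩, rfl⟩
    have hFne : (Finset.univ.filter (fun i : Fin n => i ≠ ℓ ∧ a i ≠ p - 1)).Nonempty :=
      ⟨i₁, by simp [hi₁ℓ, hi₁]⟩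
    obtain ⟨i₀, hi₀mem, hi₀min⟩ :
        ∃ i₀ ∈ Finset.univ.filter (fun i : Fin n => i ≠ ℓ ∧ a i ≠ p - 1),
          ∀ j ∈ Finset.univ.filter (fun i : Fin n => i ≠ ℓ ∧ a i ≠ p - 1), i₀ ≤ j :=
      ⟨_, Finset.min'_mem _ hFne, fun j hj => Finset.min'_le _ j hj⟩
    rw [Finset.mem_filter] at hi₀mem
    obtain ⟨-, hi₀ℓ, hi₀⟩ := hi₀mem
    have hi₀lt : (i₀ : ℕ) < n - 1 := by
      have h1 : (i₀ : ℕ) ≤ n - 1 := by have := i₀.isLt; omega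
      rcases lt_or_eq_of_le h1 with h | h
      · exact h
      · exact absurd (Fin.ext (h.trans hℓ.symm)) hi₀ℓ
    have hmin : ∀ j : Fin n, (j : ℕ) < (i₀ : ℕ) → a j = p - 1 := by
      intro j hj
      by_contra hja
      have hjℓ : j ≠ ℓ := by
        intro h
        rw [h, hℓ] at hj
        omega
      have h2 : i₀ ≤ j := hi₀min j (by simp [hjℓ, hja])
      rw [Fin.le_def] at h2
      omega
    set b : Fin n → ℕ := fun j =>
      if (j : ℕ) < (i₀ : ℕ) then 0 else if j = i₀ then a i₀ + 1 else a j with hbdef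
    have hb0 : b i₀ = a i₀ + 1 := by simp [hbdef]
    have hbsmall : ∀ j : Fin n, (j : ℕ) < (i₀ : ℕ) → b j = 0 := by
      intro j hj
      simp only [hbdef]
      rw [if_pos hj]
    have hbother : ∀ j : Fin n, ¬ (j : ℕ) < (i₀ : ℕ) → j ≠ i₀ → b j = a j := by
      intro j hj1 hj2
      simp only [hbdef]
      rw [if_neg hj1, if_neg hj2]
    set ι₀ : Fin (n - 1) := ⟨(i₀ : ℕ), hi₀lt⟩ with hι₀def
    have hcast : ∀ h' : n - 1 ≤ n, Fin.castLE h' ι₀ = i₀ := fun _ => Fin.ext rfl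
    have key : ∀ h' : n - 1 ≤ n,
        (∑ i : Fin (n - 1), b (Fin.castLE h' i) •
          ∏ j : Fin n, x j ^
            ((if (j : ℕ) < (i : ℕ) then p - 1 else 0) +
             (if j = Fin.castLE h' i then b (Fin.castLE h' i) - 1 else b j)))
        = (a i₀ + 1) • ∏ j, x j ^ a j := by
      intro h'
      rw [Finset.sum_eq_single ι₀]
      · rw [hcast]
        rw [hb0]
        congr 1
        refine Finset.prod_congr rfl fun j _ => ?_
        congr 1
        have hι₀coe : (ι₀ : ℕ) = (i₀ : ℕ) := rfl
        by_cases h1 : (j : ℕ) < (i₀ : ℕ)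
        · have hji : j ≠ i₀ := fun h => absurd h1 (by rw [h]; omega)
          rw [hι₀coe, if_pos h1, if_neg hji]
          rw [hbsmall j h1, hmin j h1]
          omega
        · by_cases h2 : j = i₀
          · subst h2
            rw [hι₀coe, if_neg h1, if_pos rfl]
            omega
          · rw [hι₀coe, if_neg h1, if_neg h2]
            rw [hbother j h1 h2]
            omega
      · intro i _ hi
        have hvi : (i : ℕ) ≠ (i₀ : ℕ) := fun h => hi (Fin.ext h)
        rcases Nat.lt_or_ge (i : ℕ) (i₀ : ℕ) with h | h
        · have hbz : b (Fin.castLE h' i) = 0 := by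
            refine hbsmall _ ?_
            rw [Fin.coe_castLE]; exact h
          rw [hbz, zero_smul]
        · have hlt : (i₀ : ℕ) < (i : ℕ) := by omega
          have hzero : (∏ j : Fin n, x j ^
              ((if (j : ℕ) < (i : ℕ) then p - 1 else 0) +
               (if j = Fin.castLE h' i then b (Fin.castLE h' i) - 1 else b j))) = 0 := by
            refine mono_zero hxp ⟨i₀, ?_⟩
            have h2 : i₀ ≠ Fin.castLE h' i := by
              intro hEq
              rw [hEq, Fin.coe_castLE] at hvi
              exact hvi rfl
            rw [if_pos hlt, if_neg h2]
            rw [hb0]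
            omega
          rw [hzero, smul_zero]
      · intro h
        exact absurd (Finset.mem_univ ι₀) h
    have hΔb : Δ (∏ j, x j ^ b j) = (a i₀ + 1) • ∏ j, x j ^ a j := by
      rw [hΔ, Delta_mono x D hD b]
      exact key _
    have hne : ((a i₀ + 1 : ℕ) : k) ≠ 0 := by
      have h1 : a i₀ + 1 < p := by have := ha i₀; omega
      intro h
      rw [CharP.cast_eq_zero_iff k p] at h
      exact absurd (Nat.le_of_dvd (by omega) h) (by omega)
    rw [SetLike.mem_coe, LinearMap.mem_range]
    refine ⟨((a i₀ + 1 : ℕ) : k)⁻¹ • ∏ j, x j ^ b j, ?_⟩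
    show Δ (((a i₀ + 1 : ℕ) : k)⁻¹ • ∏ j, x j ^ b j) = ∏ j, x j ^ a j
    rw [Derivation.map_smul, hΔb, ← Nat.cast_smul_eq_nsmul k, smul_smul,
      inv_mul_cancel₀ hne, one_smul]
  -- range Δ ≤ span S
  have hkeyA : ∀ a : Fin n → ℕ, Δ (∏ i, x i ^ a i) ∈ Submodule.span k S := by
    intro a
    by_cases hared : ∀ i, a i < p
    · have hterm : ∀ (h' : n - 1 ≤ n) (i : Fin (n - 1)),
          a (Fin.castLE h' i) • ∏ j : Fin n, x j ^
            ((if (j : ℕ) < (i : ℕ) then p - 1 else 0) +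
             (if j = Fin.castLE h' i then a (Fin.castLE h' i) - 1 else a j))
          ∈ Submodule.span k S := by
        intro h' i
        by_cases h0 : a (Fin.castLE h' i) = 0
        · rw [h0, zero_smul]; exact zero_mem _
        by_cases h1 : ∃ j : Fin n, (j : ℕ) < (i : ℕ) ∧ a j ≠ 0
        · obtain ⟨j, hj1, hj2⟩ := h1
          have hji : j ≠ Fin.castLE h' i := by
            intro hEq
            rw [hEq, Fin.coe_castLE] at hj1
            omega
          have hzero : (∏ j' : Fin n, x j' ^
              ((if (j' : ℕ) < (i : ℕ) then p - 1 else 0) +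
               (if j' = Fin.castLE h' i then a (Fin.castLE h' i) - 1 else a j'))) = 0 := by
            refine mono_zero hxp ⟨j, ?_⟩
            rw [if_pos hj1, if_neg hji]
            omega
          rw [hzero, smul_zero]
          exact zero_mem _
        · push_neg at h1
          rw [← Nat.cast_smul_eq_nsmul k]
          refine Submodule.smul_mem _ _ (Submodule.subset_span ?_)
          refine ⟨fun j => (if (j : ℕ) < (i : ℕ) then p - 1 else 0) +
              (if j = Fin.castLE h' i then a (Fin.castLE h' i) - 1 else a j), ?_, ?_, rfl⟩
          · intro j
            dsimp only
            by_cases hj1 : (j : ℕ) < (i : ℕ)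
            · have hji : j ≠ Fin.castLE h' i := by
                intro hEq
                rw [hEq, Fin.coe_castLE] at hj1
                omega
              rw [if_pos hj1, if_neg hji, h1 j hj1]
              omega
            · rw [if_neg hj1]
              by_cases hj2 : j = Fin.castLE h' i
              · rw [if_pos hj2]
                have := hared (Fin.castLE h' i)
                omega
              · rw [if_neg hj2]
                have := hared j
                omega
          · refine ⟨Fin.castLE h' i, ?_, ?_⟩
            · intro hEq
              have h2 : ((Fin.castLE h' i : Fin n) : ℕ) = (ℓ : ℕ) := by rw [hEq]
              rw [Fin.coe_castLE, hℓ] at h2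
              have := i.isLt
              omega
            · dsimp only
              have hii : ¬ ((Fin.castLE h' i : Fin n) : ℕ) < (i : ℕ) := by
                rw [Fin.coe_castLE]
                omega
              rw [if_neg hii, if_pos rfl]
              have := hared (Fin.castLE h' i)
              omega
      rw [hΔ, Delta_mono x D hD a]
      exact Submodule.sum_mem _ fun i _ => hterm _ i
    · push_neg at hared
      obtain ⟨i, hi⟩ := hared
      rw [mono_zero hxp ⟨i, hi⟩, map_zero]
      exact zero_mem _
  have hRle : LinearMap.range (Δ : B →ₗ[k] B) ≤ Submodule.span k S := by
    rintro _ ⟨v, rfl⟩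
    show Δ v ∈ Submodule.span k S
    have hv := mem_span_mono e x hx v
    induction hv using Submodule.span_induction with
    | mem w hw =>
      obtain ⟨a, rfl⟩ := hw
      exact hkeyA a
    | zero => rw [map_zero]; exact zero_mem _
    | add y z _ _ hy hz => rw [map_add]; exact add_mem hy hz
    | smul c y _ hy => rw [Derivation.map_smul]; exact Submodule.smul_mem _ _ hy
  have hpart1 : LinearMap.range (Δ : B →ₗ[k] B) = Submodule.span k S :=
    le_antisymm hRle hSle
  refine ⟨hpart1, ?_⟩
  have hppos : 0 < p := by omega
  let ge : Fin p → Fin n → ℕ := fun c i => if i = ℓ then (c : ℕ) else p - 1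
  let g : Fin p → B := fun c => ∏ i, x i ^ ge c i
  let vc : Fin p → (Fin n →₀ ℕ) := fun c => Finsupp.equivFunOnFinite.symm (ge c)
  have hvc : ∀ c i, vc c i < p := by
    intro c i
    simp only [vc, ge, Finsupp.coe_equivFunOnFinite_symm]
    split
    · exact c.isLt
    · omega
  let F : Fin p → (B →ₗ[k] k) := fun c => coeffFun e (vc c) (hvc c)
  have hFmono : ∀ (c : Fin p) (a : Fin n → ℕ), F c (∏ i, x i ^ a i)
      = if Finsupp.equivFunOnFinite.symm a = vc c then 1 else 0 := fun c a =>
    coeffFun_mono e x hx (vc c) (hvc c) a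
  let Λ : B →ₗ[k] (Fin p → k) := LinearMap.pi F
  have hkerS : Submodule.span k S ≤ LinearMap.ker Λ := by
    rw [Submodule.span_le]
    rintro m ⟨a, ha, ⟨i₁, hi₁ℓ, hi₁⟩, rfl⟩
    rw [SetLike.mem_coe, LinearMap.mem_ker]
    funext c
    rw [LinearMap.pi_apply, hFmono]
    simp only [Pi.zero_apply]
    rw [if_neg]
    intro hEq
    have h1 := DFunLike.congr_fun hEq i₁
    simp only [vc, ge, Finsupp.coe_equivFunOnFinite_symm, if_neg hi₁ℓ] at h1
    exact hi₁ h1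
  have hΛg : ∀ c c' : Fin p, Λ (g c) c' = if c = c' then 1 else 0 := by
    intro c c'
    rw [LinearMap.pi_apply]
    show F c' (∏ i, x i ^ ge c i) = _
    rw [hFmono]
    by_cases h : c = c'
    · subst h
      rw [if_pos rfl, if_pos rfl]
    · rw [if_neg h, if_neg]
      intro hEq
      have h1 := DFunLike.congr_fun hEq ℓ
      simp only [vc, ge, Finsupp.coe_equivFunOnFinite_symm, if_pos rfl] at h1
      exact h (Fin.ext h1)
  have hΛsurj : Function.Surjective Λ := by
    intro v
    refine ⟨∑ c, v c • g c, ?_⟩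
    rw [map_sum]
    funext c'
    rw [Finset.sum_apply]
    have hterm : ∀ c : Fin p, (Λ (v c • g c)) c' = if c = c' then v c else 0 := by
      intro c
      rw [map_smul, Pi.smul_apply, hΛg]
      split <;> simp
    rw [Finset.sum_congr rfl fun c _ => hterm c]
    simp
  have hW : ∀ bb : B, bb ∈ Submodule.span k (Set.range g) ⊔ LinearMap.range (Δ : B →ₗ[k] B) := by
    intro bb
    refine Submodule.span_le.2 ?_ (mem_span_mono e x hx bb)
    rintro _ ⟨a, rfl⟩
    dsimp only
    rw [SetLike.mem_coe]
    by_cases h1 : ∀ i, a i < p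
    · by_cases h2 : ∃ i, i ≠ ℓ ∧ a i ≠ p - 1
      · exact Submodule.mem_sup_right (hSle (Submodule.subset_span ⟨a, h1, h2, rfl⟩))
      · push_neg at h2
        refine Submodule.mem_sup_left (Submodule.subset_span ⟨⟨a ℓ, h1 ℓ⟩, ?_⟩)
        show ∏ i, x i ^ ge ⟨a ℓ, h1 ℓ⟩ i = ∏ i, x i ^ a i
        refine Finset.prod_congr rfl fun i _ => ?_
        congr 1
        by_cases hiℓ : i = ℓ
        · subst hiℓ
          simp [ge]
        · simp only [ge, if_neg hiℓ]
          exact (h2 i hiℓ).symm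
    · push_neg at h1
      rw [mono_zero hxp h1]
      exact zero_mem _
  have hQ : ∀ q : B ⧸ LinearMap.range (Δ : B →ₗ[k] B),
      q ∈ Submodule.span k (Set.range fun c : Fin p =>
        Submodule.Quotient.mk (p := LinearMap.range (Δ : B →ₗ[k] B)) (g c)) := by
    intro q
    obtain ⟨bb, rfl⟩ := Submodule.Quotient.mk_surjective _ q
    obtain ⟨y, hy, z, hz, rfl⟩ := Submodule.mem_sup.1 (hW bb)
    rw [Submodule.Quotient.mk_add]
    rw [(Submodule.Quotient.mk_eq_zero _).2 hz, add_zero]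
    have h1 := Submodule.mem_map_of_mem (f := (LinearMap.range (Δ : B →ₗ[k] B)).mkQ) hy
    rw [Submodule.map_span] at h1
    have h2 : (LinearMap.range (Δ : B →ₗ[k] B)).mkQ '' Set.range g
        = Set.range (fun c : Fin p =>
            Submodule.Quotient.mk (p := LinearMap.range (Δ : B →ₗ[k] B)) (g c)) := by
      rw [← Set.range_comp]
      rfl
    rwa [h2] at h1
  let φ2 := (LinearMap.range (Δ : B →ₗ[k] B)).liftQ Λ (hpart1 ▸ hkerS)
  have hφ2 : Function.Surjective φ2 := by
    intro v
    obtain ⟨bb, hbb⟩ := hΛsurj v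
    exact ⟨Submodule.Quotient.mk bb, by rw [Submodule.liftQ_apply]; exact hbb⟩
  let φ1 : (Fin p → k) →ₗ[k] (B ⧸ LinearMap.range (Δ : B →ₗ[k] B)) :=
    { toFun := fun v => ∑ c, v c • Submodule.Quotient.mk (p := LinearMap.range (Δ : B →ₗ[k] B)) (g c)
      map_add' := fun u v => by
        simp [add_smul, Finset.sum_add_distrib]
      map_smul' := fun r v => by
        simp [mul_smul, Finset.smul_sum] }
  have hφ1 : Function.Surjective φ1 := by
    rw [← LinearMap.range_eq_top, eq_top_iff]
    intro q _
    refine Submodule.span_le.2 ?_ (hQ q)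
    rintro _ ⟨c, rfl⟩
    dsimp only
    rw [SetLike.mem_coe, LinearMap.mem_range]
    refine ⟨Pi.single c 1, ?_⟩
    simp only [φ1, LinearMap.coe_mk, AddHom.coe_mk]
    rw [Finset.sum_eq_single c]
    · rw [Pi.single_eq_same, one_smul]
    · intro c' _ hc'
      rw [Pi.single_eq_of_ne hc', zero_smul]
    · intro h
      exact absurd (Finset.mem_univ c) h
  have hr1 := LinearMap.lift_rank_le_of_surjective φ1 hφ1
  have hr2 := LinearMap.lift_rank_le_of_surjective φ2 hφ2
  rw [rank_fun', Fintype.card_fin, Cardinal.lift_natCast] at hr1 hr2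
  have hrank : Module.rank k (B ⧸ LinearMap.range (Δ : B →ₗ[k] B)) = p := by
    have h3 := le_antisymm hr1 hr2
    rwa [Cardinal.lift_eq_nat_iff] at h3
  exact Module.finrank_eq_of_rank_eq hrank
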